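/- Let K be a field of characteristic p > 0 and Λ = K[∂^{[1]}, ∂^{[2]}, …] the subalgebra of D(K[x]) generated by all divided power operators ∂^{[j]}, j ≥ 1. Then every element of the augmentation ideal Λ_+ = ⊕_{j≥1} K∂^{[j]} is nilpotent, and Λ/Λ_+ ≅ K; hence K is, up to isomorphism, the only simple Λ-module. -/

import Mathlib

set_option synthInstance.maxHeartbeats 1000000
set_option maxHeartbeats 1000000

universe u v

/-- The augmentation ideal `Λ_+ = ⊕_{j≥1} K·∂^{[j]}` of the algebra
`Λ = K[∂^{[1]}, ∂^{[2]}, …]` of divided power (Hasse derivative) operators,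
viewed as a `K`-subspace of `End_K(K[x])`. -/
noncomputable def lambdaPlus (K : Type u) [Field K] :
    Submodule K (Module.End K (Polynomial K)) :=
  Submodule.span K
    {f | ∃ j : ℕ, 1 ≤ j ∧ f = (Polynomial.hasseDeriv j : Module.End K (Polynomial K))}

/-- The subalgebra `Λ = K[∂^{[1]}, ∂^{[2]}, …]` of `D(K[x]) ⊆ End_K(K[x])`
generated by the divided power operators `∂^{[j]}`, `j ≥ 1`. -/
noncomputable def lambdaAlg (K : Type u) [Field K] :
    Subalgebra K (Module.End K (Polynomial K)) :=
  Algebra.adjoin K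
    {f | ∃ j : ℕ, 1 ≤ j ∧ f = (Polynomial.hasseDeriv j : Module.End K (Polynomial K))}

namespace LambdaAux

open Polynomial

variable {K : Type u} [Field K]

/-- Lucas-type divisibility: `p ∣ C(p·i, i)` for `i ≥ 1`. -/
theorem dvd_choose_pmul (p : ℕ) (hp : p.Prime) : ∀ i : ℕ, 1 ≤ i → p ∣ (p * i).choose i := by
  intro i
  induction i using Nat.strong_induction_on with
  | _ i ih =>
    intro hi
    haveI : Fact p.Prime := ⟨hp⟩
    have h := @Choose.choose_modEq_choose_mod_mul_choose_div_nat (p * i) i p _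
    have hmod : (p * i) % p = 0 := Nat.mul_mod_right p i
    have hdiv : (p * i) / p = i := Nat.mul_div_cancel_left i hp.pos
    rw [hmod, hdiv] at h
    rcases Nat.eq_zero_or_pos (i % p) with h0 | hpos
    · have hpd : p ∣ i := Nat.dvd_of_mod_eq_zero h0
      rw [h0] at h
      have hq : 1 ≤ i / p := Nat.one_le_div_iff hp.pos |>.mpr (Nat.le_of_dvd hi hpd)
      have hlt : i / p < i := Nat.div_lt_self hi hp.one_lt
      have hd : p ∣ i.choose (i / p) := by
        have := ih (i / p) hlt hq
        rwa [Nat.mul_div_cancel' hpd] at this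
      have h2 : (p * i).choose i ≡ 0 [MOD p] := by
        calc (p * i).choose i ≡ Nat.choose 0 0 * i.choose (i / p) [MOD p] := h
          _ ≡ 0 [MOD p] := by
              simp only [Nat.choose_self, one_mul]
              exact (Nat.modEq_zero_iff_dvd).mpr hd
      exact (Nat.modEq_zero_iff_dvd).mp h2
    · have h2 : (p * i).choose i ≡ 0 [MOD p] := by
        calc (p * i).choose i ≡ Nat.choose 0 (i % p) * i.choose (i / p) [MOD p] := h
          _ = 0 := by rw [Nat.choose_eq_zero_of_lt hpos, zero_mul]
      exact (Nat.modEq_zero_iff_dvd).mp h2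

theorem hD_mul (k l : ℕ) :
    (hasseDeriv k : Module.End K (Polynomial K)) * hasseDeriv l
      = (k + l).choose k • hasseDeriv (k + l) := by
  rw [Module.End.mul_eq_comp, hasseDeriv_comp]

theorem hD_pow (i : ℕ) : ∀ k : ℕ, ∃ c : ℕ,
    (hasseDeriv i : Module.End K (Polynomial K)) ^ (k + 1) = c • hasseDeriv ((k + 1) * i)
    ∧ (1 ≤ k → ((k + 1) * i).choose i ∣ c) := by
  intro k
  induction k with
  | zero => exact ⟨1, by simp, by omega⟩
  | succ k ih =>
    obtain ⟨c, hc, _⟩ := ih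
    refine ⟨c * ((k + 1) * i + i).choose ((k + 1) * i), ?_, ?_⟩
    · rw [pow_succ, hc, smul_mul_assoc, hD_mul, smul_smul,
        show (k + 1) * i + i = (k + 2) * i from by ring]
    · intro _
      have hsymm : ((k + 1) * i + i).choose ((k + 1) * i) = ((k + 2) * i).choose i := by
        have h1 : (k + 1) * i + i = (k + 2) * i := by ring
        have h3 : (k + 1) * i = (k + 2) * i - i := by
          have : (k + 2) * i = (k + 1) * i + i := by ring
          omega
        rw [h1, h3, Nat.choose_symm (by nlinarith)]
      rw [hsymm]
      exact Dvd.dvd.mul_left dvd_rfl c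

theorem hD_pow_p (p : ℕ) (hp : p.Prime) [CharP K p] (i : ℕ) (hi : 1 ≤ i) :
    (hasseDeriv i : Module.End K (Polynomial K)) ^ p = 0 := by
  obtain ⟨c, hc, hdvd⟩ := hD_pow (K := K) i (p - 1)
  have hp1 : p - 1 + 1 = p := Nat.succ_pred_eq_of_pos hp.pos
  rw [hp1] at hc hdvd
  have hpc : p ∣ c := (dvd_choose_pmul p hp i hi).trans (hdvd (by have := hp.two_le; omega))
  have hc0 : (c : K) = 0 := (CharP.cast_eq_zero_iff K p c).mpr hpc
  rw [hc, ← Nat.cast_smul_eq_nsmul K, hc0, zero_smul]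

/-- The generating set. -/
def genSet (K : Type u) [Field K] : Set (Module.End K (Polynomial K)) :=
  {f | ∃ j : ℕ, 1 ≤ j ∧ f = (Polynomial.hasseDeriv j : Module.End K (Polynomial K))}

theorem lambdaPlus_eq : lambdaPlus K = Submodule.span K (genSet K) := rfl
theorem lambdaAlg_eq : lambdaAlg K = Algebra.adjoin K (genSet K) := rfl

theorem gen_comm : ∀ f ∈ genSet K, ∀ g ∈ genSet K, Commute f g := by
  rintro _ ⟨k, -, rfl⟩ _ ⟨l, -, rfl⟩
  show _ * _ = _ * _
  rw [hD_mul, hD_mul, add_comm l k, Nat.choose_symm_add]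

theorem alg_comm : ∀ x ∈ lambdaAlg K, ∀ y ∈ lambdaAlg K, Commute x y := by
  intro x hx
  rw [lambdaAlg_eq] at hx
  induction hx using Algebra.adjoin_induction with
  | mem f hf =>
    intro y hy
    rw [lambdaAlg_eq] at hy
    induction hy using Algebra.adjoin_induction with
    | mem g hg => exact gen_comm f hf g hg
    | algebraMap r => exact Algebra.commute_algebraMap_right r f
    | add a b _ _ ha hb => exact (ha).add_right (hb)
    | mul a b _ _ ha hb => exact (ha).mul_right (hb)
  | algebraMap r => exact fun y _ => Algebra.commute_algebraMap_left r y
  | add a b _ _ ha hb => exact fun y hy => ((ha y hy)).add_left ((hb y hy))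
  | mul a b _ _ ha hb => exact fun y hy => ((ha y hy)).mul_left ((hb y hy))

theorem plus_le_alg : ∀ x ∈ lambdaPlus K, x ∈ lambdaAlg K := by
  intro x hx
  rw [lambdaPlus_eq] at hx
  exact (Submodule.span_le (p := Subalgebra.toSubmodule (lambdaAlg K))).mpr
    (fun f hf => Algebra.subset_adjoin hf) hx

theorem gen_mem_plus {j : ℕ} (hj : 1 ≤ j) :
    (hasseDeriv j : Module.End K (Polynomial K)) ∈ lambdaPlus K :=
  Submodule.subset_span ⟨j, hj, rfl⟩

theorem plus_mul : ∀ x ∈ lambdaPlus K, ∀ y ∈ lambdaPlus K, x * y ∈ lambdaPlus K := by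
  intro x hx
  induction hx using Submodule.span_induction with
  | mem f hf =>
    obtain ⟨k, hk, rfl⟩ := hf
    intro y hy
    induction hy using Submodule.span_induction with
    | mem g hg =>
      obtain ⟨l, hl, rfl⟩ := hg
      rw [hD_mul]
      exact nsmul_mem (gen_mem_plus (by omega)) _
    | zero => rw [mul_zero]; exact zero_mem _
    | add a b _ _ ha hb => rw [mul_add]; exact add_mem ha hb
    | smul c a _ ha => rw [mul_smul_comm]; exact Submodule.smul_mem _ _ ha
  | zero => intro y _; rw [zero_mul]; exact zero_mem _
  | add a b _ _ ha hb => intro y hy; rw [add_mul]; exact add_mem (ha y hy) (hb y hy)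
  | smul c a _ ha => intro y hy; rw [smul_mul_assoc]; exact Submodule.smul_mem _ _ (ha y hy)

theorem alg_mul_plus : ∀ a ∈ lambdaAlg K, ∀ y ∈ lambdaPlus K, a * y ∈ lambdaPlus K := by
  intro a ha
  induction ha using Algebra.adjoin_induction with
  | mem f hf =>
    intro y hy
    obtain ⟨j, hj, rfl⟩ := hf
    exact plus_mul _ (gen_mem_plus hj) _ hy
  | algebraMap r =>
    intro y hy
    rw [← Algebra.smul_def]
    exact Submodule.smul_mem _ _ hy
  | add a b _ _ ha hb =>
    intro y hy
    rw [add_mul]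
    exact add_mem (ha y hy) (hb y hy)
  | mul a b _ _ ha hb =>
    intro y hy
    rw [mul_assoc]
    exact ha _ (hb y hy)

theorem plus_nil (p : ℕ) (hp : p.Prime) [CharP K p] :
    ∀ x ∈ lambdaPlus K, IsNilpotent x := by
  intro x hx
  induction hx using Submodule.span_induction with
  | mem f hf =>
    obtain ⟨j, hj, rfl⟩ := hf
    exact ⟨p, hD_pow_p p hp j hj⟩
  | zero => exact IsNilpotent.zero
  | add a b ha hb hna hnb =>
    exact Commute.isNilpotent_add
      (alg_comm a (plus_le_alg a ha) b (plus_le_alg b hb)) hna hnb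
  | smul c a ha hna => exact hna.smul c

theorem apply_one_plus : ∀ x ∈ lambdaPlus K, x (1 : Polynomial K) = 0 := by
  intro x hx
  induction hx using Submodule.span_induction with
  | mem f hf =>
    obtain ⟨j, hj, rfl⟩ := hf
    exact hasseDeriv_apply_one j hj
  | zero => rfl
  | add a b _ _ ha hb => simp [LinearMap.add_apply, ha, hb]
  | smul c a _ ha => simp [LinearMap.smul_apply, ha]

/-- Every element of `Λ` decomposes as `algebraMap c + (element of Λ_+)`. -/
theorem decomp : ∀ x ∈ lambdaAlg K, ∃ c : K,
    x - algebraMap K (Module.End K (Polynomial K)) c ∈ lambdaPlus K := by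
  intro x hx
  induction hx using Algebra.adjoin_induction with
  | mem f hf =>
    obtain ⟨j, hj, rfl⟩ := hf
    exact ⟨0, by simpa using gen_mem_plus hj⟩
  | algebraMap r => exact ⟨r, by simp⟩
  | add a b _ _ ha hb =>
    obtain ⟨c, hc⟩ := ha
    obtain ⟨d, hd⟩ := hb
    refine ⟨c + d, ?_⟩
    have : a + b - algebraMap K (Module.End K (Polynomial K)) (c + d)
        = (a - algebraMap K _ c) + (b - algebraMap K _ d) := by
      rw [map_add]; abel
    rw [this]
    exact add_mem hc hd
  | mul a b hamem hbmem ha hb =>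
    obtain ⟨c, hc⟩ := ha
    obtain ⟨d, hd⟩ := hb
    refine ⟨c * d, ?_⟩
    have hab : a * b - algebraMap K (Module.End K (Polynomial K)) (c * d)
        = a * (b - algebraMap K (Module.End K (Polynomial K)) d)
          + (a - algebraMap K (Module.End K (Polynomial K)) c)
              * algebraMap K (Module.End K (Polynomial K)) d := by
      rw [map_mul, mul_sub, sub_mul, sub_add_sub_cancel]
    rw [hab]
    refine add_mem (alg_mul_plus a hamem _ hd) ?_
    rw [← Algebra.commutes d, ← Algebra.smul_def]
    exact Submodule.smul_mem _ _ hc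

theorem apply_one_eq_C (x : Module.End K (Polynomial K)) (hx : x ∈ lambdaAlg K) :
    ∃ c : K, x (1 : Polynomial K) = Polynomial.C c
      ∧ x - algebraMap K (Module.End K (Polynomial K)) c ∈ lambdaPlus K := by
  obtain ⟨c, hc⟩ := decomp x hx
  refine ⟨c, ?_, hc⟩
  have h0 := apply_one_plus _ hc
  have : x (1 : Polynomial K)
      = (x - algebraMap K (Module.End K (Polynomial K)) c) 1
        + (algebraMap K (Module.End K (Polynomial K)) c) 1 := by
    simp [LinearMap.sub_apply]
  rw [this, h0, zero_add, Module.algebraMap_end_apply, smul_eq_C_mul, mul_one]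

/-- The augmentation homomorphism `φ : Λ → K`. -/
noncomputable def phi : (lambdaAlg K) →ₐ[K] K where
  toFun a := ((a : Module.End K (Polynomial K)) (1 : Polynomial K)).coeff 0
  map_one' := by simp [Polynomial.coeff_one_zero]
  map_mul' a b := by
    show (((a * b : lambdaAlg K) : Module.End K (Polynomial K)) (1 : Polynomial K)).coeff 0
      = (((a : Module.End K (Polynomial K)) (1 : Polynomial K)).coeff 0)
        * (((b : Module.End K (Polynomial K)) (1 : Polynomial K)).coeff 0)
    obtain ⟨c, hc, -⟩ := apply_one_eq_C (b : Module.End K (Polynomial K)) b.2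
    have hCsm : (Polynomial.C c : Polynomial K) = c • (1 : Polynomial K) := by
      rw [smul_eq_C_mul, mul_one]
    have h1 : ((a * b : lambdaAlg K) : Module.End K (Polynomial K)) (1 : Polynomial K)
        = c • ((a : Module.End K (Polynomial K)) (1 : Polynomial K)) := by
      rw [Subalgebra.coe_mul, Module.End.mul_apply, hc, hCsm, map_smul]
    rw [h1, Polynomial.coeff_smul, hc, Polynomial.coeff_C]
    simp [smul_eq_mul, mul_comm]
  map_zero' := by simp
  map_add' a b := by simp [LinearMap.add_apply]
  commutes' r := by
    simp [Subalgebra.coe_algebraMap, Module.algebraMap_end_apply, Polynomial.coeff_smul,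
      Polynomial.coeff_one_zero, smul_eq_mul]

theorem phi_ker (x : lambdaAlg K) :
    phi x = 0 ↔ (x : Module.End K (Polynomial K)) ∈ lambdaPlus K := by
  obtain ⟨c, hc, hmem⟩ := apply_one_eq_C (x : Module.End K (Polynomial K)) x.2
  have hphix : phi x = c := by
    show ((x : Module.End K (Polynomial K)) (1 : Polynomial K)).coeff 0 = c
    rw [hc, Polynomial.coeff_C]
    simp
  constructor
  · intro h
    rw [hphix] at h
    subst h
    simpa using hmem
  · intro h
    have h0 := apply_one_plus _ h
    rw [h0] at hc
    have : c = 0 := by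
      have := congrArg (fun q => Polynomial.coeff q 0) hc
      simpa using this.symm
    rw [hphix, this]

theorem alg_mul_comm (a b : lambdaAlg K) : a * b = b * a :=
  Subtype.ext (alg_comm _ a.2 _ b.2)

theorem nil_in_sub (p : ℕ) (hp : p.Prime) [CharP K p] (x : lambdaAlg K)
    (hx : (x : Module.End K (Polynomial K)) ∈ lambdaPlus K) : IsNilpotent x := by
  obtain ⟨n, hn⟩ := plus_nil p hp _ hx
  exact ⟨n, Subtype.ext (by simpa using hn)⟩

theorem part3 (p : ℕ) (hp : p.Prime) [CharP K p]
    (M : Type v) [AddCommGroup M] [Module (lambdaAlg K) M]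
    (hM : IsSimpleModule (lambdaAlg K) M)
    (x : lambdaAlg K) (hx : (x : Module.End K (Polynomial K)) ∈ lambdaPlus K) :
    ∀ m : M, x • m = 0 := by
  haveI := hM
  obtain ⟨n, hn⟩ := nil_in_sub p hp x hx
  let f : M →ₗ[lambdaAlg K] M :=
    { toFun := fun m => x • m
      map_add' := fun m m' => smul_add x m m'
      map_smul' := fun a m => by
        simp only [RingHom.id_apply, smul_smul, alg_mul_comm] }
  rcases hM.toIsSimpleOrder.eq_bot_or_eq_top (LinearMap.ker f) with hker | hker
  · exfalso
    have hzero : ∀ (k : ℕ) (m : M), x ^ k • m = 0 → m = 0 := by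
      intro k
      induction k with
      | zero => intro m hm; simpa using hm
      | succ k ih =>
        intro m hm
        rw [pow_succ, mul_smul] at hm
        have hxm : x • m = 0 := ih _ hm
        have : m ∈ LinearMap.ker f := LinearMap.mem_ker.mpr hxm
        rw [hker] at this
        simpa using this
    have hall : ∀ m : M, m = 0 := fun m => hzero n m (by rw [hn, zero_smul])
    haveI : Nontrivial M := IsSimpleModule.nontrivial (lambdaAlg K) M
    obtain ⟨m₀, hm₀⟩ := exists_ne (0 : M)
    exact hm₀ (hall m₀)
  · intro m
    have hmem : m ∈ LinearMap.ker f := by rw [hker]; trivial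
    exact LinearMap.mem_ker.mp hmem

/-- If `M` is a simple `Λ`-module and `m ≠ 0`, then any `a` killing `m` lies in `Λ_+`. -/
theorem ker_span (p : ℕ) (hp : p.Prime) [CharP K p]
    (M : Type v) [AddCommGroup M] [Module (lambdaAlg K) M]
    (hM : IsSimpleModule (lambdaAlg K) M) (m : M) (hm : m ≠ 0)
    (a : lambdaAlg K) (ha : a • m = 0) :
    (a : Module.End K (Polynomial K)) ∈ lambdaPlus K := by
  obtain ⟨c, hc⟩ := decomp (a : Module.End K (Polynomial K)) a.2
  have hy : ((a - algebraMap K (lambdaAlg K) c : lambdaAlg K) :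
      Module.End K (Polynomial K)) ∈ lambdaPlus K := by
    simpa using hc
  have h0 : (a - algebraMap K (lambdaAlg K) c) • m = 0 := part3 p hp M hM _ hy m
  have hsplit : a = (a - algebraMap K (lambdaAlg K) c) + algebraMap K (lambdaAlg K) c := by
    abel
  have hcm : (algebraMap K (lambdaAlg K) c) • m = 0 := by
    have h1 : a • m = (a - algebraMap K (lambdaAlg K) c) • m
        + (algebraMap K (lambdaAlg K) c) • m := by
      nth_rewrite 1 [hsplit]
      rw [add_smul]
    rw [ha, h0, zero_add] at h1
    exact h1.symm
  have hc0 : c = 0 := by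
    by_contra hc0
    apply hm
    have h1 : (algebraMap K (lambdaAlg K) (c⁻¹ * c)) • m = 0 := by
      rw [map_mul, mul_smul, hcm, smul_zero]
    rwa [inv_mul_cancel₀ hc0, map_one, one_smul] at h1
  rw [hc0] at hy
  simpa using hy

theorem equiv_simple (p : ℕ) (hp : p.Prime) [CharP K p]
    (M N : Type v) [AddCommGroup M] [Module (lambdaAlg K) M]
    [AddCommGroup N] [Module (lambdaAlg K) N]
    (hM : IsSimpleModule (lambdaAlg K) M) (hN : IsSimpleModule (lambdaAlg K) N) :
    Nonempty (M ≃ₗ[lambdaAlg K] N) := by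
  haveI := hM
  haveI := hN
  haveI : Nontrivial M := IsSimpleModule.nontrivial (lambdaAlg K) M
  haveI : Nontrivial N := IsSimpleModule.nontrivial (lambdaAlg K) N
  obtain ⟨m, hm⟩ := exists_ne (0 : M)
  obtain ⟨n, hn⟩ := exists_ne (0 : N)
  have hsurM : ∀ m' : M, ∃ a : lambdaAlg K, a • m = m' := by
    intro m'
    obtain ⟨a, ha⟩ := IsSimpleModule.toSpanSingleton_surjective (lambdaAlg K) hm m'
    exact ⟨a, by rwa [LinearMap.toSpanSingleton_apply] at ha⟩
  have hsurN : ∀ n' : N, ∃ a : lambdaAlg K, a • n = n' := by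
    intro n'
    obtain ⟨a, ha⟩ := IsSimpleModule.toSpanSingleton_surjective (lambdaAlg K) hn n'
    exact ⟨a, by rwa [LinearMap.toSpanSingleton_apply] at ha⟩
  -- if `a` kills one generator it kills the other
  have hMtoN : ∀ a : lambdaAlg K, a • m = 0 → a • n = 0 := fun a ha =>
    part3 p hp N hN a (ker_span p hp M hM m hm a ha) n
  have hNtoM : ∀ a : lambdaAlg K, a • n = 0 → a • m = 0 := fun a ha =>
    part3 p hp M hM a (ker_span p hp N hN n hn a ha) m
  -- transfer of coincidence of actions
  have htrans : ∀ a b : lambdaAlg K, a • m = b • m → a • n = b • n := by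
    intro a b hab
    have hsplit : a = b + (a - b) := by abel
    have h1 : a • m = b • m + (a - b) • m := by
      nth_rewrite 1 [hsplit]
      rw [add_smul]
    rw [hab] at h1
    have h2 : (a - b) • m = 0 := by
      have := (left_eq_add).mp h1
      exact this
    have h3 : (a - b) • n = 0 := hMtoN _ h2
    have h4 : a • n = b • n + (a - b) • n := by
      nth_rewrite 1 [hsplit]
      rw [add_smul]
    rw [h4, h3, add_zero]
  -- the map
  let g0 : M → N := fun m' => (Classical.choose (hsurM m')) • n
  have hg0 : ∀ (a : lambdaAlg K) (m' : M), a • m = m' → g0 m' = a • n := by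
    intro a m' ha
    apply htrans
    rw [Classical.choose_spec (hsurM m'), ha]
  let g : M →ₗ[lambdaAlg K] N :=
    { toFun := g0
      map_add' := by
        intro m₁ m₂
        obtain ⟨a₁, ha₁⟩ := hsurM m₁
        obtain ⟨a₂, ha₂⟩ := hsurM m₂
        have h12 : (a₁ + a₂) • m = m₁ + m₂ := by rw [add_smul, ha₁, ha₂]
        rw [hg0 _ _ h12, hg0 _ _ ha₁, hg0 _ _ ha₂, add_smul]
      map_smul' := by
        intro a m'
        obtain ⟨b, hb⟩ := hsurM m'
        have hab : (a * b) • m = a • m' := by rw [mul_smul, hb]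
        show g0 (a • m') = a • g0 m'
        rw [hg0 _ _ hab, hg0 _ _ hb, mul_smul] }
  have hginj : Function.Injective g := by
    rw [injective_iff_map_eq_zero g] at *
    intro m' hm'
    obtain ⟨a, ha⟩ := hsurM m'
    have hgn : a • n = 0 := by rw [← hg0 _ _ ha]; exact hm'
    rw [← ha]
    exact hNtoM a hgn
  have hgsur : Function.Surjective g := by
    intro n'
    obtain ⟨a, ha⟩ := hsurN n'
    exact ⟨a • m, by rw [show g (a • m) = a • n from hg0 a (a • m) rfl, ha]⟩
  exact ⟨LinearEquiv.ofBijective g ⟨hginj, hgsur⟩⟩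

end LambdaAux

theorem lambda_augmentation (K : Type u) [Field K] (p : ℕ) (hp : p.Prime) [CharP K p] :
    (∀ x ∈ lambdaPlus K, IsNilpotent x) ∧
    (∃ φ : (lambdaAlg K) →ₐ[K] K,
      ∀ x : lambdaAlg K, φ x = 0 ↔ (x : Module.End K (Polynomial K)) ∈ lambdaPlus K) ∧
    (∀ (M : Type v) [AddCommGroup M] [Module (lambdaAlg K) M],
      IsSimpleModule (lambdaAlg K) M →
        ∀ x : lambdaAlg K, (x : Module.End K (Polynomial K)) ∈ lambdaPlus K →
          ∀ m : M, x • m = 0) ∧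
    (∀ (M N : Type v) [AddCommGroup M] [Module (lambdaAlg K) M]
      [AddCommGroup N] [Module (lambdaAlg K) N],
      IsSimpleModule (lambdaAlg K) M → IsSimpleModule (lambdaAlg K) N →
        Nonempty (M ≃ₗ[lambdaAlg K] N)) := by
  refine ⟨LambdaAux.plus_nil p hp, ⟨LambdaAux.phi, LambdaAux.phi_ker⟩, ?_, ?_⟩
  · intro M _ _ hM x hx m
    exact LambdaAux.part3 p hp M hM x hx m
  · intro M N _ _ _ _ hM hN
    exact LambdaAux.equiv_simple p hp M N hM hN
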